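/- Let X be a compact metric space, f : X → X continuous, and x, y ∈ X. Suppose (q_i) is a strictly increasing sequence of positive integers with q_{i+1} - q_i ≤ M for all i. If limsup_{n→∞} (1/n)#{0 ≤ i < n : d(f^i x, f^i y) < t} = 1 for all t > 0, then limsup_{n→∞} (1/n)#{0 ≤ i < n : d(f^{q_i} x, f^{q_i} y) < t} = 1 for all t > 0. -/

import Mathlib

open Filter Set
open scoped Classical

/-- Lower density of times `i < n` with `dist (f^[i] x) (f^[i] y) < t`. -/
noncomputable def ldens {X : Type*} [MetricSpace X] (f : X → X) (x y : X) (t : ℝ) : ℝ :=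
  Filter.liminf (fun n : ℕ =>
    (((Finset.range n).filter (fun i => dist (f^[i] x) (f^[i] y) < t)).card : ℝ) / n)
    Filter.atTop

/-- Upper density of times `i < n` with `dist (f^[i] x) (f^[i] y) < t`. -/
noncomputable def udens {X : Type*} [MetricSpace X] (f : X → X) (x y : X) (t : ℝ) : ℝ :=
  Filter.limsup (fun n : ℕ =>
    (((Finset.range n).filter (fun i => dist (f^[i] x) (f^[i] y) < t)).card : ℝ) / n)
    Filter.atTop

/-- Lower density along the sequence of times `q i`. -/
noncomputable def ldensSeq {X : Type*} [MetricSpace X] (f : X → X) (q : ℕ → ℕ)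
    (x y : X) (t : ℝ) : ℝ :=
  Filter.liminf (fun n : ℕ =>
    (((Finset.range n).filter (fun i => dist (f^[q i] x) (f^[q i] y) < t)).card : ℝ) / n)
    Filter.atTop

/-- Upper density along the sequence of times `q i`. -/
noncomputable def udensSeq {X : Type*} [MetricSpace X] (f : X → X) (q : ℕ → ℕ)
    (x y : X) (t : ℝ) : ℝ :=
  Filter.limsup (fun n : ℕ =>
    (((Finset.range n).filter (fun i => dist (f^[q i] x) (f^[q i] y) < t)).card : ℝ) / n)
    Filter.atTop

theorem stmt_1 {X : Type*} [MetricSpace X] [CompactSpace X]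
    (f : X → X) (hf : Continuous f) (x y : X)
    (q : ℕ → ℕ) (hq : StrictMono q) (hqpos : ∀ i, 0 < q i)
    (M : ℕ) (hgap : ∀ i, q (i + 1) - q i ≤ M)
    (h : ∀ t : ℝ, 0 < t → udens f x y t = 1) :
    ∀ t : ℝ, 0 < t → udensSeq f q x y t = 1 := by
  have hM : 1 ≤ M := by
    have h1 := hgap 0
    have h2 : q 0 < q (0 + 1) := hq (by omega)
    omega
  have hlin : ∀ k, q k ≤ q 0 + k * M := by
    intro k
    induction k with
    | zero => simp
    | succ k ih =>
      have h1 := hgap k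
      have h2 : q k ≤ q (k + 1) := hq.monotone (by omega)
      have h3 : q (k + 1) ≤ q k + M := by omega
      calc q (k + 1) ≤ q k + M := h3
        _ ≤ q 0 + k * M + M := by omega
        _ = q 0 + (k + 1) * M := by ring
  intro t ht
  set u : ℕ → ℝ := fun n =>
    (((Finset.range n).filter (fun i => dist (f^[q i] x) (f^[q i] y) < t)).card : ℝ) / n
    with hu_def
  set v : ℕ → ℝ := fun n =>
    (((Finset.range n).filter (fun i => dist (f^[i] x) (f^[i] y) < t)).card : ℝ) / n
    with hv_def
  have hub : ∀ n, u n ≤ 1 := by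
    intro n
    apply div_le_one_of_le₀
    · exact_mod_cast (Finset.card_filter_le _ _).trans (by simp)
    · positivity
  have hlb : ∀ n, 0 ≤ u n := by intro n; positivity
  have hvlb : ∀ n, 0 ≤ v n := by intro n; positivity
  have hbound : IsBoundedUnder (· ≤ ·) atTop u := isBoundedUnder_of ⟨1, hub⟩
  have hcob : IsCoboundedUnder (· ≥ ·) atTop u :=
    isCoboundedUnder_ge_of_le atTop hub
  have hvcob : IsCoboundedUnder (· ≤ ·) atTop v :=
    isCoboundedUnder_le_of_le atTop hvlb
  have hle : udensSeq f q x y t ≤ 1 :=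
    Filter.limsup_le_of_le (isCoboundedUnder_le_of_le atTop hlb) (Eventually.of_forall hub)
  have hge : ∀ ε : ℝ, 0 < ε → 1 - ε ≤ udensSeq f q x y t := by
    intro ε hε
    set δ : ℝ := ε / (2 * M) with hδ_def
    have hMpos : (0:ℝ) < M := by exact_mod_cast hM
    have hδ : 0 < δ := by positivity
    have hfreq : ∃ᶠ N in atTop, 1 - δ < v N := by
      apply frequently_lt_of_lt_limsup hvcob
      have := h t ht
      rw [udens] at this
      rw [← hv_def] at this
      rw [this]
      linarith
    apply le_limsup_of_frequently_le _ hbound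
    rw [frequently_atTop]
    intro m
    obtain ⟨N, hNge, hNv⟩ := (frequently_atTop.mp hfreq) (max (2 * q 0 + 1) (q m + 1))
    have hN1 : 2 * q 0 + 1 ≤ N := le_trans (le_max_left _ _) hNge
    have hN2 : q m + 1 ≤ N := le_trans (le_max_right _ _) hNge
    have hex : ∃ k, N ≤ q k := ⟨N, hq.le_apply⟩
    set n : ℕ := Nat.find hex with hn_def
    have hqn : N ≤ q n := Nat.find_spec hex
    have hlt : ∀ i < n, q i < N := by
      intro i hi
      have := Nat.find_min hex hi
      omega
    have hmn : m < n := by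
      by_contra hc
      push_neg at hc
      have : q n ≤ q m := hq.monotone hc
      omega
    refine ⟨n, hmn.le, ?_⟩
    -- counting
    set G := ((Finset.range N).filter (fun i => dist (f^[i] x) (f^[i] y) < t)).card with hG
    set B := ((Finset.range N).filter (fun i => ¬ dist (f^[i] x) (f^[i] y) < t)).card with hB
    set a := ((Finset.range n).filter (fun i => dist (f^[q i] x) (f^[q i] y) < t)).card with ha
    set b := ((Finset.range n).filter (fun i => ¬ dist (f^[q i] x) (f^[q i] y) < t)).card with hb
    have hGB : G + B = N := by
      rw [hG, hB]
      rw [Finset.card_filter_add_card_filter_not]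
      exact Finset.card_range N
    have hab : a + b = n := by
      rw [ha, hb]
      rw [Finset.card_filter_add_card_filter_not]
      exact Finset.card_range n
    have hbB : b ≤ B := by
      apply Finset.card_le_card_of_injOn q
      · intro i hi
        simp only [Finset.mem_coe, Finset.mem_filter, Finset.mem_range] at hi ⊢
        exact ⟨hlt i hi.1, hi.2⟩
      · exact fun i _ j _ hij => hq.injective hij
    -- bounds on n
    have hnM : N ≤ q 0 + n * M := le_trans hqn (hlin n)
    have hnpos : 0 < n := by
      rcases Nat.eq_zero_or_pos n with h0 | h0
      · exfalso
        rw [h0] at hqn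
        omega
      · exact h0
    -- real arithmetic
    have hBN : (B:ℝ) < δ * N := by
      have hvN : 1 - δ < (G:ℝ) / N := hNv
      have hNpos : (0:ℝ) < N := by
        have : 0 < N := by omega
        exact_mod_cast this
      rw [lt_div_iff₀ hNpos] at hvN
      have : (G:ℝ) + B = N := by exact_mod_cast hGB
      nlinarith
    have hnN : (N:ℝ) ≤ 2 * n * M := by
      have h1 : (N:ℝ) ≤ q 0 + n * M := by exact_mod_cast hnM
      have h2 : 2 * (q 0:ℝ) + 1 ≤ N := by exact_mod_cast hN1
      linarith
    have hBn : (B:ℝ) ≤ ε * n := by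
      have hnr : (0:ℝ) < n := by exact_mod_cast hnpos
      have : δ * N ≤ ε * n := by
        rw [hδ_def]
        rw [div_mul_eq_mul_div, div_le_iff₀ (by positivity)]
        nlinarith
      linarith
    show (1:ℝ) - ε ≤ u n
    have hnr : (0:ℝ) < n := by exact_mod_cast hnpos
    have han : (a:ℝ) + b = n := by exact_mod_cast hab
    have hbBr : (b:ℝ) ≤ B := by exact_mod_cast hbB
    rw [hu_def]
    simp only
    rw [le_div_iff₀ hnr]
    rw [← ha]
    nlinarith
  have h1 : 1 ≤ udensSeq f q x y t := by
    by_contra hc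
    push_neg at hc
    have := hge ((1 - udensSeq f q x y t) / 2) (by linarith)
    linarith
  linarith
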